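/- arXiv:2304.02741 — 7 statements merged into one kernel-verified Lean document; each statement's English description precedes it below -/
import Mathlib

section
/- Equivalence theorem (sufficiency direction): if w ∈ Ω_ε is a weight vector with M(w) positive definite and max_{w' ∈ Ω_ε} Tr(M(w)⁻¹ M(w')) = k, then w maximizes log|M(·)| over Ω_ε. -/
open Matrix in
/-- For a Hermitian real matrix, the trace is the sum of the eigenvalues. -/
lemma aux_trace_eq_sum_eigenvalues {k : ℕ} {C : Matrix (Fin k) (Fin k) ℝ}
    (hC : C.IsHermitian) : C.trace = ∑ i, hC.eigenvalues i := by
  set U : Matrix (Fin k) (Fin k) ℝ := (hC.eigenvectorUnitary : Matrix (Fin k) (Fin k) ℝ)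
  have h1 : star U * U = 1 := (Unitary.mem_iff.mp hC.eigenvectorUnitary.2).1
  calc C.trace
      = (U * diagonal (RCLike.ofReal ∘ hC.eigenvalues) * star U).trace := by
        exact congrArg Matrix.trace hC.spectral_theorem
    _ = (star U * U * diagonal (RCLike.ofReal ∘ hC.eigenvalues)).trace := by
        rw [trace_mul_cycle]
    _ = ∑ i, hC.eigenvalues i := by
        rw [h1, one_mul, trace_diagonal]
        simp [RCLike.ofReal]

open Matrix MatrixOrder in
/-- Key inequality: if `A, B` are positive definite and `tr(A⁻¹ B) ≤ k`,
then `log det B ≤ log det A`. -/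
lemma aux_logdet_le {k : ℕ} {A B : Matrix (Fin k) (Fin k) ℝ}
    (hA : A.PosDef) (hB : B.PosDef)
    (htr : Matrix.trace (A⁻¹ * B) ≤ (k : ℝ)) :
    Real.log B.det ≤ Real.log A.det := by
  have hAinv : A⁻¹.PosDef := hA.inv
  set S : Matrix (Fin k) (Fin k) ℝ := CFC.sqrt A⁻¹ with hSdef
  have hSherm : S.IsHermitian := (Matrix.nonneg_iff_posSemidef.mp (CFC.sqrt_nonneg A⁻¹)).1
  have hSS : S * S = A⁻¹ := CFC.sqrt_mul_sqrt_self A⁻¹ (Matrix.nonneg_iff_posSemidef.mpr hAinv.posSemidef)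
  have hSdet : S.det ^ 2 = A⁻¹.det := by
    rw [sq, ← det_mul, hSS]
  have hAdet : (0:ℝ) < A.det := hA.det_pos
  have hAinvdet : (0:ℝ) < A⁻¹.det := hAinv.det_pos
  have hSdet_ne : S.det ≠ 0 := by
    have h2 : (0:ℝ) < S.det ^ 2 := by rw [hSdet]; exact hAinvdet
    exact (pow_ne_zero_iff two_ne_zero).mp h2.ne'
  have hSunit : IsUnit S := (isUnit_iff_isUnit_det _).2 hSdet_ne.isUnit
  -- C := S * B * S is positive definite
  have hC : (S * B * S).PosDef := by
    refine Matrix.PosDef.of_dotProduct_mulVec_pos ?_ ?_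
    · have : (S * B * S)ᴴ = Sᴴ * Bᴴ * Sᴴ := by
        rw [conjTranspose_mul, conjTranspose_mul, mul_assoc]
      rw [Matrix.IsHermitian, this, hSherm.eq, hB.isHermitian.eq]
    · intro v hv
      have hSv : S *ᵥ v ≠ 0 := by
        intro h
        apply hv
        apply Matrix.mulVec_injective_iff_isUnit.mpr hSunit
        simpa using h
      have := hB.dotProduct_mulVec_pos hSv
      have hST : Sᵀ = S := by
        rw [← Matrix.conjTranspose_eq_transpose_of_trivial]; exact hSherm.eq
      have hrw : star v ⬝ᵥ ((S * B * S) *ᵥ v) = star (S *ᵥ v) ⬝ᵥ (B *ᵥ (S *ᵥ v)) := by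
        simp only [star_trivial]
        rw [← Matrix.mulVec_mulVec, ← Matrix.mulVec_mulVec,
          Matrix.dotProduct_mulVec v S, ← Matrix.mulVec_transpose, hST]
      rw [hrw]
      exact this
  set C := S * B * S with hCdefn
  have hCherm := hC.isHermitian
  -- determinant relation
  have hdetC : C.det = A⁻¹.det * B.det := by
    rw [hCdefn, det_mul, det_mul, ← hSdet]
    ring
  -- trace relation
  have htrC : C.trace = Matrix.trace (A⁻¹ * B) := by
    rw [hCdefn, Matrix.trace_mul_comm, ← mul_assoc, hSS]
  -- eigenvalue computation
  have heig_pos : ∀ i, 0 < hCherm.eigenvalues i := fun i => hC.eigenvalues_pos i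
  have hdet_eq : C.det = ∏ i, hCherm.eigenvalues i := by
    have := hCherm.det_eq_prod_eigenvalues
    simpa [RCLike.ofReal] using this
  have htr_eq : C.trace = ∑ i, hCherm.eigenvalues i := aux_trace_eq_sum_eigenvalues hCherm
  have hlogC : Real.log C.det ≤ 0 := by
    rw [hdet_eq, Real.log_prod (fun i _ => (heig_pos i).ne')]
    have h1 : ∑ i, Real.log (hCherm.eigenvalues i) ≤ ∑ i, (hCherm.eigenvalues i - 1) :=
      Finset.sum_le_sum fun i _ => Real.log_le_sub_one_of_pos (heig_pos i)
    have h2 : ∑ i : Fin k, (hCherm.eigenvalues i - 1) = C.trace - k := by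
      rw [Finset.sum_sub_distrib, htr_eq]
      simp
    have h3 : C.trace - (k:ℝ) ≤ 0 := by rw [htrC]; linarith
    linarith
  have hBdet : (0:ℝ) < B.det := hB.det_pos
  have hCdet : (0:ℝ) < C.det := hC.det_pos
  have hBd : B.det = A.det * C.det := by
    rw [hdetC, Matrix.det_nonsing_inv, Ring.inverse_eq_inv]
    field_simp
  rw [hBd, Real.log_mul hAdet.ne' hCdet.ne']
  linarith

/-- Equivalence theorem, sufficiency: if `w ∈ Ω_ε`, `M(w)` is positive
definite, and `max_{w' ∈ Ω_ε} Tr(M(w)⁻¹ M(w')) = k` (i.e. the trace is `≤ k`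
for all `w' ∈ Ω_ε`, with value `k` attained at `w' = w`), then `w` maximizes
`log|M(·)|` over `Ω_ε`. -/
theorem equivalence_theorem_sufficiency (N k : ℕ) (x : Fin N → Fin k → ℝ)
    (ε : ℝ) (hε : 0 < ε) (hε1 : ε < 1)
    (M : (Fin N → ℝ) → Matrix (Fin k) (Fin k) ℝ)
    (hM : ∀ v, M v = ∑ i, v i • Matrix.vecMulVec (x i) (x i))
    (Ω : Set (Fin N → ℝ))
    (hΩ : Ω = {w | (∀ i, 0 ≤ w i ∧ w i ≤ ε) ∧ ∑ i, w i = 1})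
    (w : Fin N → ℝ) (hw : w ∈ Ω) (hpd : (M w).PosDef)
    (hmax : ∀ w' ∈ Ω, Matrix.trace ((M w)⁻¹ * M w') ≤ (k : ℝ))
    (hattain : Matrix.trace ((M w)⁻¹ * M w) = (k : ℝ)) :
    ∀ w' ∈ Ω, (M w').PosDef → Real.log (M w').det ≤ Real.log (M w).det := by
  intro w' hw' hpd'
  exact aux_logdet_le hpd hpd' (hmax w' hw')
end

section
/- Equivalence theorem (necessity direction): if w maximizes log|M(·)| over Ω_ε with M(w) positive definite, then max_{w' ∈ Ω_ε} Tr(M(w)⁻¹ M(w')) = k, with the maximum achieved at w' = w. -/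
open Matrix Real Filter Set Polynomial

lemma psd_smul_vecMulVec {k : ℕ} (c : ℝ) (hc : 0 ≤ c) (a : Fin k → ℝ) :
    (c • Matrix.vecMulVec a a).PosSemidef := by
  rw [Matrix.posSemidef_iff_dotProduct_mulVec]
  constructor
  · ext i j
    simp [Matrix.conjTranspose_apply, Matrix.vecMulVec_apply, mul_comm]
  · intro y
    have h1 : (c • Matrix.vecMulVec a a) *ᵥ y = (c * (a ⬝ᵥ y)) • a := by
      ext j
      simp [Matrix.mulVec, Matrix.vecMulVec_apply, dotProduct, Finset.mul_sum,
        mul_assoc, mul_comm, mul_left_comm]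
    rw [h1]
    have : star y ⬝ᵥ ((c * (a ⬝ᵥ y)) • a) = c * ((a ⬝ᵥ y) * (a ⬝ᵥ y)) := by
      simp [dotProduct, Finset.mul_sum, mul_assoc, mul_comm, mul_left_comm]
    rw [this]
    exact mul_nonneg hc (mul_self_nonneg _)

lemma psd_smul' {k : ℕ} {A : Matrix (Fin k) (Fin k) ℝ} (hA : A.PosDef) {c : ℝ} (hc : 0 < c) :
    (c • A).PosDef := by
  rw [Matrix.posDef_iff_dotProduct_mulVec]
  constructor
  · rw [Matrix.IsHermitian, Matrix.conjTranspose_smul, hA.1.eq, star_trivial]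
  · intro y hy
    rw [Matrix.smul_mulVec, dotProduct_smul, smul_eq_mul]
    exact mul_pos hc ((Matrix.posDef_iff_dotProduct_mulVec.mp hA).2 hy)

/-- Equivalence theorem, necessity: if `w` maximizes `log|M(·)|` over `Ω_ε`
with `M(w)` positive definite, then `max_{w' ∈ Ω_ε} Tr(M(w)⁻¹ M(w')) = k`,
the maximum being achieved at `w' = w`. -/
theorem equivalence_theorem_necessity (N k : ℕ) (x : Fin N → Fin k → ℝ)
    (ε : ℝ) (hε : 0 < ε) (hε1 : ε < 1)
    (M : (Fin N → ℝ) → Matrix (Fin k) (Fin k) ℝ)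
    (hM : ∀ v, M v = ∑ i, v i • Matrix.vecMulVec (x i) (x i))
    (Ω : Set (Fin N → ℝ))
    (hΩ : Ω = {w | (∀ i, 0 ≤ w i ∧ w i ≤ ε) ∧ ∑ i, w i = 1})
    (w : Fin N → ℝ) (hw : w ∈ Ω) (hpd : (M w).PosDef)
    (hopt : ∀ w' ∈ Ω, (M w').PosDef →
      Real.log (M w').det ≤ Real.log (M w).det) :
    (∀ w' ∈ Ω, Matrix.trace ((M w)⁻¹ * M w') ≤ (k : ℝ)) ∧
      Matrix.trace ((M w)⁻¹ * M w) = (k : ℝ) := by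
  classical
  have hdetA : 0 < (M w).det := hpd.det_pos
  have hAunit : IsUnit (M w).det := (ne_of_gt hdetA).isUnit
  have hinv : (M w)⁻¹ * M w = 1 := Matrix.nonsing_inv_mul _ hAunit
  have htr : Matrix.trace ((M w)⁻¹ * M w) = (k : ℝ) := by
    rw [hinv, Matrix.trace_one]; simp
  refine ⟨?_, htr⟩
  intro w' hw'
  -- M v is PSD for nonnegative v
  have hpsd : ∀ v : Fin N → ℝ, (∀ i, 0 ≤ v i) → (M v).PosSemidef := by
    intro v hv
    rw [hM]
    exact Finset.sum_induction _ _ (fun a b ha hb => ha.add hb) Matrix.PosSemidef.zero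
      (fun i _ => psd_smul_vecMulVec (v i) (hv i) (x i))
  -- linearity of M
  have hlin : ∀ (a b : ℝ) (u v : Fin N → ℝ), M (a • u + b • v) = a • M u + b • M v := by
    intro a b u v
    simp only [hM, Finset.smul_sum, ← Finset.sum_add_distrib]
    refine Finset.sum_congr rfl fun i _ => ?_
    simp [add_smul, smul_smul, mul_comm]
  rw [hΩ] at hw hw'
  obtain ⟨hwb, hws⟩ := hw
  obtain ⟨hw'b, hw's⟩ := hw'
  set A := M w with hA
  set B := M w' with hB
  have hBpsd : B.PosSemidef := hpsd w' fun i => (hw'b i).1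
  set C : Matrix (Fin k) (Fin k) ℝ := A⁻¹ * (B - A) with hC
  set q : Polynomial ℝ := (Matrix.det (1 + (Polynomial.X : ℝ[X]) • C.map Polynomial.C)).divX.divX
    with hq
  -- key inequality for t in (0,1)
  have key : ∀ t : ℝ, t ∈ Set.Ioo (0:ℝ) 1 → Matrix.trace C ≤ -(q.eval t) * t := by
    intro t ht
    obtain ⟨ht0, ht1⟩ := ht
    set wt : Fin N → ℝ := (1 - t) • w + t • w' with hwt
    have hMwt : M wt = A + t • (B - A) := by
      rw [hwt, hlin, smul_sub, sub_smul, one_smul]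
      abel
    have hmem : wt ∈ Ω := by
      rw [hΩ]
      constructor
      · intro i
        have h1 := (hwb i).1; have h2 := (hwb i).2
        have h3 := (hw'b i).1; have h4 := (hw'b i).2
        simp only [hwt, Pi.add_apply, Pi.smul_apply, smul_eq_mul]
        constructor
        · nlinarith
        · nlinarith
      · simp only [hwt, Pi.add_apply, Pi.smul_apply, smul_eq_mul]
        rw [Finset.sum_add_distrib, ← Finset.mul_sum, ← Finset.mul_sum, hws, hw's]
        ring
    have hwtpd : (M wt).PosDef := by
      have h1 : ((1 - t) • A).PosDef := psd_smul' hpd (by linarith)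
      have h2 : (t • B).PosSemidef := by
        have := hpsd (t • w') (fun i => mul_nonneg ht0.le (hw'b i).1)
        rwa [show M (t • w') = t • B by
          have := hlin t 0 w' w'
          simpa using this] at this
      have h3 : ((1 - t) • A + t • B).PosDef := h1.add_posSemidef h2
      have heq : (1 - t) • A + t • B = A + t • (B - A) := by
        rw [smul_sub, sub_smul, one_smul]; abel
      rw [hMwt, ← heq]
      exact h3
    have hdetwt : 0 < (M wt).det := hwtpd.det_pos
    have hlog := hopt wt hmem hwtpd
    have hdetle : (M wt).det ≤ A.det := by
      rwa [Real.log_le_log_iff hdetwt hdetA] at hlog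
    have hfact : M wt = A * (1 + t • C) := by
      rw [hMwt, hC, Matrix.mul_add, mul_one, Matrix.mul_smul,
        Matrix.mul_nonsing_inv_cancel_left _ _ hAunit]
    have hdet1 : Matrix.det (1 + t • C) ≤ 1 := by
      have : A.det * (1 + t • C).det ≤ A.det * 1 := by
        rw [mul_one, ← Matrix.det_mul, ← hfact]; exact hdetle
      exact le_of_mul_le_mul_left this hdetA
    have hexp := Matrix.det_one_add_smul t C
    rw [hexp] at hdet1
    -- 1 + trace C * t + q.eval t * t^2 ≤ 1
    have h5 : Matrix.trace C * t ≤ (-(q.eval t) * t) * t := by nlinarith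
    exact le_of_mul_le_mul_right h5 ht0
  -- take limit t → 0+
  have hlim : Filter.Tendsto (fun t : ℝ => -(q.eval t) * t) (nhdsWithin 0 (Set.Ioi 0)) (nhds 0) := by
    have hcont : Continuous fun t : ℝ => -(q.eval t) * t := by
      exact (q.continuous.neg).mul continuous_id
    have h0 : -(q.eval (0:ℝ)) * (0:ℝ) = 0 := by simp
    exact (h0 ▸ hcont.tendsto 0).mono_left nhdsWithin_le_nhds
  have hev : ∀ᶠ t in nhdsWithin (0:ℝ) (Set.Ioi 0), Matrix.trace C ≤ -(q.eval t) * t := by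
    filter_upwards [Ioo_mem_nhdsGT_of_mem (by constructor <;> norm_num : (0:ℝ) ∈ Set.Ico 0 1)]
      with t ht
    exact key t ht
  have htrC : Matrix.trace C ≤ 0 := ge_of_tendsto hlim hev
  have : Matrix.trace C = Matrix.trace (A⁻¹ * B) - (k : ℝ) := by
    rw [hC, Matrix.mul_sub, Matrix.trace_sub, hinv, Matrix.trace_one]
    simp
  linarith [this ▸ htrC]
end

section
/- Monotonicity of optimal weights in leverage: if w maximizes log|M(·)| over Ω_ε (with M(w) positive definite) and xᵢᵀ M(w)⁻¹ xᵢ < xⱼᵀ M(w)⁻¹ xⱼ, then wᵢ ≤ wⱼ. -/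
open Matrix

lemma real_psd_vecMulVec {k : ℕ} (u : Fin k → ℝ) :
    (Matrix.vecMulVec u u).PosSemidef := by
  rw [Matrix.posSemidef_iff_dotProduct_mulVec]
  constructor
  · ext a b
    simp [Matrix.vecMulVec_apply, Matrix.conjTranspose_apply, mul_comm]
  · intro v
    have h : star v ⬝ᵥ (Matrix.vecMulVec u u *ᵥ v) = (u ⬝ᵥ v) * (u ⬝ᵥ v) := by
      simp only [dotProduct, mulVec, Matrix.vecMulVec_apply, Pi.star_apply, star_trivial,
        Finset.sum_mul, Finset.mul_sum]
      rw [Finset.sum_comm]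
      exact Finset.sum_congr rfl fun a _ => Finset.sum_congr rfl fun b _ => by ring
    rw [h]
    exact mul_self_nonneg _

lemma real_psd_smul {k : ℕ} {Q : Matrix (Fin k) (Fin k) ℝ} (hQ : Q.PosSemidef)
    {c : ℝ} (hc : 0 ≤ c) : (c • Q).PosSemidef := by
  rw [Matrix.posSemidef_iff_dotProduct_mulVec]
  constructor
  · ext a b
    have := congrFun (congrFun hQ.1 a) b
    simp only [Matrix.conjTranspose_apply, star_trivial] at this ⊢
    simp [this]
  · intro v
    have : star v ⬝ᵥ ((c • Q) *ᵥ v) = c * (star v ⬝ᵥ (Q *ᵥ v)) := by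
      simp [Matrix.smul_mulVec, dotProduct_smul]
    rw [this]
    exact mul_nonneg hc (hQ.dotProduct_mulVec_nonneg v)

lemma real_pd_smul {k : ℕ} {Q : Matrix (Fin k) (Fin k) ℝ} (hQ : Q.PosDef)
    {c : ℝ} (hc : 0 < c) : (c • Q).PosDef := by
  rw [Matrix.posDef_iff_dotProduct_mulVec]
  constructor
  · ext a b
    have := congrFun (congrFun hQ.1 a) b
    simp only [Matrix.conjTranspose_apply, star_trivial] at this ⊢
    simp [this]
  · intro v hv
    have : star v ⬝ᵥ ((c • Q) *ᵥ v) = c * (star v ⬝ᵥ (Q *ᵥ v)) := by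
      simp [Matrix.smul_mulVec, dotProduct_smul]
    rw [this]
    exact mul_pos hc (hQ.dotProduct_mulVec_pos hv)

lemma real_psd_sum {k N : ℕ} (f : Fin N → Matrix (Fin k) (Fin k) ℝ)
    (hf : ∀ m, (f m).PosSemidef) : (∑ m, f m).PosSemidef := by
  classical
  refine Finset.sum_induction f _ (fun a b ha hb => ha.add hb) ?_ (fun m _ => hf m)
  exact Matrix.PosSemidef.zero

/-- Monotonicity of optimal weights in leverage: if `w` maximizes `log|M(·)|`
over `Ω_ε` (with `M(w)` positive definite) and
`xᵢᵀ M(w)⁻¹ xᵢ < xⱼᵀ M(w)⁻¹ xⱼ`, then `wᵢ ≤ wⱼ`. -/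
theorem optimal_weights_monotone_in_leverage (N k : ℕ) (x : Fin N → Fin k → ℝ)
    (ε : ℝ) (hε : 0 < ε) (hε1 : ε < 1)
    (M : (Fin N → ℝ) → Matrix (Fin k) (Fin k) ℝ)
    (hM : ∀ v, M v = ∑ i, v i • Matrix.vecMulVec (x i) (x i))
    (Ω : Set (Fin N → ℝ))
    (hΩ : Ω = {w | (∀ i, 0 ≤ w i ∧ w i ≤ ε) ∧ ∑ i, w i = 1})
    (w : Fin N → ℝ) (hw : w ∈ Ω) (hpd : (M w).PosDef)
    (hopt : ∀ w' ∈ Ω, (M w').PosDef →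
      Real.log (M w').det ≤ Real.log (M w).det)
    (i j : Fin N)
    (hlev : x i ⬝ᵥ ((M w)⁻¹ *ᵥ x i) < x j ⬝ᵥ ((M w)⁻¹ *ᵥ x j)) :
    w i ≤ w j := by
  classical
  by_contra hcon
  push_neg at hcon
  subst hΩ
  obtain ⟨hbd, hsum⟩ := hw
  set A : Matrix (Fin k) (Fin k) ℝ := (M w)⁻¹ with hA
  have hij : i ≠ j := fun h => by rw [h] at hlev; exact lt_irrefl _ hlev
  have hAd : A.PosDef := hpd.inv
  set li : ℝ := x i ⬝ᵥ (A *ᵥ x i) with hli_def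
  set lj : ℝ := x j ⬝ᵥ (A *ᵥ x j) with hlj_def
  have hli0 : 0 ≤ li := by
    have := hAd.posSemidef.dotProduct_mulVec_nonneg (x i)
    simpa [dotProduct, hli_def] using this
  have hlilj : li < lj := hlev
  have hwi_pos : 0 < w i := lt_of_le_of_lt (hbd j).1 hcon
  -- choose the perturbation size δ
  set δ : ℝ := min ((w i - w j) / 2) ((lj - li) / (2 * (li * lj + 1))) with hδ_def
  have hden : 0 < 2 * (li * lj + 1) := by nlinarith [mul_nonneg hli0 (hli0.trans hlilj.le)]
  have hδpos : 0 < δ := lt_min (by linarith) (div_pos (by linarith) hden)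
  have hδ1 : δ ≤ (w i - w j) / 2 := min_le_left _ _
  have hδ2 : δ * (2 * (li * lj + 1)) ≤ lj - li :=
    (le_div_iff₀ hden).mp (min_le_right _ _)
  -- the perturbed weights
  set w' : Fin N → ℝ := fun m => w m + (if m = j then δ else 0) - (if m = i then δ else 0)
    with hw'_def
  have hw'j : w' j = w j + δ := by simp [hw'_def, Ne.symm hij]
  have hw'i : w' i = w i - δ := by simp [hw'_def, hij]
  have hw'mem : w' ∈ {w | (∀ i, 0 ≤ w i ∧ w i ≤ ε) ∧ ∑ i, w i = 1} := by
    constructor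
    · intro m
      by_cases hmj : m = j
      · subst hmj
        rw [hw'j]
        constructor
        · have := (hbd m).1; linarith
        · have := (hbd i).2; linarith
      · by_cases hmi : m = i
        · subst hmi
          rw [hw'i]
          constructor
          · have := (hbd j).1; linarith
          · have := (hbd m).2; linarith
        · have : w' m = w m := by simp [hw'_def, hmi, hmj]
          rw [this]; exact hbd m
    · simp only [hw'_def]
      rw [Finset.sum_sub_distrib, Finset.sum_add_distrib, Finset.sum_ite_eq',
        Finset.sum_ite_eq']
      simpa using hsum
  -- the vecMulVec matrices
  set X : Fin N → Matrix (Fin k) (Fin k) ℝ := fun m => Matrix.vecMulVec (x m) (x m) with hX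
  -- decomposition of M w'
  have hMw' : M w' = M w + (δ • X j - δ • X i) := by
    rw [hM, hM]
    have h1 : ∀ m : Fin N, w' m • X m
        = w m • X m + (if m = j then δ • X j else 0) - (if m = i then δ • X i else 0) := by
      intro m
      by_cases h1 : m = j
      · subst h1
        have h2 : m ≠ i := Ne.symm hij
        simp [hw'_def, h2, add_smul]
      · by_cases h2 : m = i
        · subst h2
          simp [hw'_def, h1, sub_smul]
        · simp [hw'_def, h1, h2]
    change ∑ m, w' m • X m = ∑ m, w m • X m + (δ • X j - δ • X i)
    simp_rw [h1]
    rw [Finset.sum_sub_distrib, Finset.sum_add_distrib, Finset.sum_ite_eq',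
      Finset.sum_ite_eq']
    simp [sub_eq_add_neg, add_assoc]
  -- positive definiteness of M w'
  have hpd' : (M w').PosDef := by
    have hhalf : ((2 : ℝ)⁻¹ • M w).PosDef := real_pd_smul hpd (by norm_num)
    have hP : (M w' - (2 : ℝ)⁻¹ • M w).PosSemidef := by
      have hPsum : M w' - (2 : ℝ)⁻¹ • M w = ∑ m, (w' m - 2⁻¹ * w m) • X m := by
        rw [hM, hM, Finset.smul_sum, ← Finset.sum_sub_distrib]
        simp_rw [smul_smul, ← sub_smul]
        rfl
      rw [hPsum]
      refine real_psd_sum _ fun m => ?_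
      refine real_psd_smul (real_psd_vecMulVec (x m)) ?_
      by_cases hmj : m = j
      · subst hmj
        rw [hw'j]
        have := (hbd m).1; linarith
      · by_cases hmi : m = i
        · subst hmi
          rw [hw'i]
          have := (hbd j).1; linarith
        · have : w' m = w m := by simp [hw'_def, hmi, hmj]
          rw [this]
          have := (hbd m).1; linarith
    have : M w' = (2 : ℝ)⁻¹ • M w + (M w' - (2 : ℝ)⁻¹ • M w) := by abel
    rw [this]
    exact hhalf.add_posSemidef hP
  -- the rank-two update matrices
  set U : Matrix (Fin k) (Fin 2) ℝ :=
    Matrix.of (fun a b => if b = 0 then δ * x j a else -(δ * x i a)) with hU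
  set V : Matrix (Fin 2) (Fin k) ℝ :=
    Matrix.of (fun b c => if b = 0 then x j c else x i c) with hV
  have hUV : U * V = δ • X j - δ • X i := by
    ext a c
    simp only [Matrix.mul_apply, Fin.sum_univ_two, hU, hV, Matrix.of_apply,
      Matrix.sub_apply, Matrix.smul_apply, hX, Matrix.vecMulVec_apply, smul_eq_mul]
    norm_num
    ring
  have hdetMw : IsUnit (M w).det := hpd.det_pos.ne'.isUnit
  have hdet : (M w').det = (M w).det * (1 + V * A * U).det := by
    rw [hMw', ← hUV, hA]
    exact Matrix.det_add_mul U V hdetMw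
  -- symmetry of A
  have hAh : A.IsHermitian := hpd.isHermitian.inv
  have hAsymm : ∀ d e, A d e = A e d := by
    intro d e
    have := congrFun (congrFun hAh.eq d) e
    simpa [Matrix.conjTranspose_apply, star_trivial] using this.symm
  set s : ℝ := x i ⬝ᵥ (A *ᵥ x j) with hs_def
  have hdd : ∀ (u v : Fin k → ℝ), u ⬝ᵥ (A *ᵥ v) = ∑ d, ∑ e, u d * A d e * v e := by
    intro u v
    simp only [dotProduct, mulVec, Finset.mul_sum]
    exact Finset.sum_congr rfl fun d _ => Finset.sum_congr rfl fun e _ => by ring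
  have hsym : x j ⬝ᵥ (A *ᵥ x i) = s := by
    rw [hs_def, hdd, hdd, Finset.sum_comm]
    refine Finset.sum_congr rfl fun e _ => Finset.sum_congr rfl fun d _ => ?_
    rw [hAsymm e d]; ring
  -- compute the 2x2 determinant
  have hmat : (1 + V * A * U) = Matrix.of !![1 + δ * lj, -(δ * s); δ * s, 1 - δ * li] := by
    have key : ∀ (c : ℝ) (u v : Fin k → ℝ),
        (∑ d, v d * ∑ e, A d e * (c * u e)) = c * (v ⬝ᵥ (A *ᵥ u)) := by
      intro c u v
      simp only [dotProduct, mulVec, Finset.mul_sum]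
      rw [Finset.sum_comm]
      conv_rhs => rw [Finset.sum_comm]
      exact Finset.sum_congr rfl fun d _ => Finset.sum_congr rfl fun e _ => by ring
    ext b c
    have hVAU : (V * A * U) b c = ∑ d, V b d * ∑ e, A d e * U e c := by
      simp only [Matrix.mul_apply, Finset.sum_mul, Finset.mul_sum]
      rw [Finset.sum_comm]
      exact Finset.sum_congr rfl fun d _ => Finset.sum_congr rfl fun e _ => by ring
    change _ = (!![1 + δ * lj, -(δ * s); δ * s, 1 - δ * li] : Matrix (Fin 2) (Fin 2) ℝ) b c
    rw [Matrix.add_apply, hVAU]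
    fin_cases b <;> fin_cases c <;>
      simp only [Matrix.add_apply, Matrix.one_apply, hVAU, hU, hV, Matrix.of_apply] <;>
      norm_num
    · rw [key δ (x j) (x j), ← hlj_def]
    · rw [key δ (x i) (x j), hsym]
    · rw [key δ (x j) (x i), ← hs_def]
    · rw [key δ (x i) (x i), ← hli_def]; ring
  have hdet2 : (1 + V * A * U).det = (1 + δ * lj) * (1 - δ * li) + (δ * s) * (δ * s) := by
    rw [hmat]
    rw [Matrix.det_fin_two]
    change (1 + δ * lj) * (1 - δ * li) - (-(δ * s)) * (δ * s) = _
    ring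
  have hfac : 1 < (1 + δ * lj) * (1 - δ * li) + (δ * s) * (δ * s) := by
    nlinarith [mul_le_mul_of_nonneg_left hδ2 hδpos.le, sq_nonneg (δ * s), sq_nonneg δ,
      mul_pos hδpos hδpos, mul_nonneg hli0 (hli0.trans hlilj.le)]
  have hdetlt : (M w).det < (M w').det := by
    rw [hdet, hdet2]
    nlinarith [hpd.det_pos]
  have h1 := hopt w' hw'mem hpd'
  have h2 := Real.log_lt_log hpd.det_pos hdetlt
  linarith
end

section
/- Trichotomy of the constrained D-optimal solution: if w solves max log|M(w)| over Ω_ε with M(w) positive definite, then there exists a constant c such that for every i: wᵢ = 0 whenever xᵢᵀ M(w)⁻¹ xᵢ < c, wᵢ = ε whenever xᵢᵀ M(w)⁻¹ xᵢ > c, and 0 ≤ wᵢ ≤ ε when xᵢᵀ M(w)⁻¹ xᵢ = c. -/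
open Matrix

lemma psd_cauchy_schwarz {n : ℕ} (P : Matrix (Fin n) (Fin n) ℝ) (hP : P.PosSemidef)
    (u v : Fin n → ℝ) :
    (u ⬝ᵥ (P *ᵥ v))^2 ≤ (u ⬝ᵥ (P *ᵥ u)) * (v ⬝ᵥ (P *ᵥ v)) := by
  have hsymm : ∀ a b : Fin n → ℝ, a ⬝ᵥ (P *ᵥ b) = b ⬝ᵥ (P *ᵥ a) := by
    intro a b
    have hPt : Pᵀ = P := by
      have := hP.1
      simpa [Matrix.IsHermitian, conjTranspose, Matrix.map, Matrix.transpose] using this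
    rw [dotProduct_mulVec, ← mulVec_transpose, hPt, dotProduct_comm]
  have key : ∀ t : ℝ, 0 ≤ (v ⬝ᵥ (P *ᵥ v)) * (t*t) + (2 * (u ⬝ᵥ (P *ᵥ v))) * t + (u ⬝ᵥ (P *ᵥ u)) := by
    intro t
    have h := (posSemidef_iff_dotProduct_mulVec.mp hP).2 (u + t • v)
    simp only [star_trivial] at h
    have hexp : (u + t • v) ⬝ᵥ (P *ᵥ (u + t • v)) =
        (v ⬝ᵥ (P *ᵥ v)) * (t*t) + (2 * (u ⬝ᵥ (P *ᵥ v))) * t + (u ⬝ᵥ (P *ᵥ u)) := by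
      rw [mulVec_add, mulVec_smul, dotProduct_add, add_dotProduct, add_dotProduct,
        smul_dotProduct, smul_dotProduct, dotProduct_smul, hsymm v u]
      simp [smul_eq_mul]; ring
    linarith [hexp ▸ h]
  have hd := discrim_le_zero key
  simp only [discrim] at hd
  nlinarith [hd]

lemma dot_mulVec_symm {n : ℕ} (P : Matrix (Fin n) (Fin n) ℝ) (hP : P.IsHermitian)
    (u v : Fin n → ℝ) : u ⬝ᵥ (P *ᵥ v) = v ⬝ᵥ (P *ᵥ u) := by
  have hPt : Pᵀ = P := by simpa [Matrix.IsHermitian, conjTranspose, Matrix.map, Matrix.transpose] using hP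
  rw [dotProduct_mulVec, ← mulVec_transpose, hPt, dotProduct_comm]

lemma exchange_le (N k : ℕ) (x : Fin N → Fin k → ℝ) (ε : ℝ) (hε : 0 < ε)
    (M : (Fin N → ℝ) → Matrix (Fin k) (Fin k) ℝ)
    (hM : ∀ v, M v = ∑ i, v i • Matrix.vecMulVec (x i) (x i))
    (w : Fin N → ℝ) (hwb : ∀ i, 0 ≤ w i ∧ w i ≤ ε) (hsum : ∑ i, w i = 1)
    (hpd : (M w).PosDef)
    (hopt : ∀ w', (∀ i, 0 ≤ w' i ∧ w' i ≤ ε) → (∑ i, w' i = 1) → (M w').PosDef →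
      Real.log (M w').det ≤ Real.log (M w).det)
    (i j : Fin N) (hwi : 0 < w i) (hwj : w j < ε) :
    x j ⬝ᵥ ((M w)⁻¹ *ᵥ x j) ≤ x i ⬝ᵥ ((M w)⁻¹ *ᵥ x i) := by
  by_contra hL
  push_neg at hL
  set A := M w with hA
  set Li := x i ⬝ᵥ (A⁻¹ *ᵥ x i) with hLi
  set Lj := x j ⬝ᵥ (A⁻¹ *ᵥ x j) with hLj
  set s := x i ⬝ᵥ (A⁻¹ *ᵥ x j) with hs
  have hij : i ≠ j := by rintro rfl; exact lt_irrefl _ hL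
  have hAinv : A⁻¹.PosDef := hpd.inv
  have hCS : s^2 ≤ Li * Lj := psd_cauchy_schwarz A⁻¹ hAinv.posSemidef (x i) (x j)
  have hLi0 : 0 ≤ Li := by simpa [star_trivial] using (posSemidef_iff_dotProduct_mulVec.mp hAinv.posSemidef).2 (x i)
  set e := Li * Lj - s^2 with he
  have he0 : 0 ≤ e := by simp [he]; linarith
  set d := Lj - Li with hd
  have hd0 : 0 < d := by simp [hd]; linarith
  set t := min (min (w i) (ε - w j)) (min (d/(e+1)) (1/(Li+1))) with ht
  have ht0 : 0 < t := by
    apply lt_min (lt_min hwi (by linarith))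
    exact lt_min (div_pos hd0 (by linarith)) (div_pos one_pos (by linarith))
  have htwi : t ≤ w i := le_trans (min_le_left _ _) (min_le_left _ _)
  have htwj : t ≤ ε - w j := le_trans (min_le_left _ _) (min_le_right _ _)
  have hte : t * e < d := by
    have h1 : t ≤ d/(e+1) := le_trans (min_le_right _ _) (min_le_left _ _)
    have h2 : t * (e+1) ≤ d := by
      rw [← le_div_iff₀ (by linarith : (0:ℝ) < e+1)]; exact h1
    nlinarith
  have htLi : t * Li < 1 := by
    have h1 : t ≤ 1/(Li+1) := le_trans (min_le_right _ _) (min_le_right _ _)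
    have h2 : t * (Li+1) ≤ 1 := by
      rw [← le_div_iff₀ (by linarith : (0:ℝ) < Li+1)]; exact h1
    nlinarith
  -- the perturbed weights
  set w' : Fin N → ℝ := fun m => w m + (if m = j then t else 0) - (if m = i then t else 0) with hw'
  have hw'b : ∀ m, 0 ≤ w' m ∧ w' m ≤ ε := by
    intro m
    rcases hwb m with ⟨h1, h2⟩
    by_cases hmj : m = j
    · subst hmj
      have hne : m ≠ i := fun h => hij h.symm
      simp only [hw', if_pos rfl, if_neg hne]
      constructor <;> · simp; linarith
    · by_cases hmi : m = i
      · subst hmi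
        simp only [hw', if_neg hmj, if_pos rfl]
        constructor <;> · simp; linarith
      · simp only [hw', if_neg hmj, if_neg hmi]
        constructor <;> · simp; linarith
  have hw'sum : ∑ m, w' m = 1 := by
    simp [hw', Finset.sum_add_distrib, Finset.sum_sub_distrib, Finset.sum_ite_eq', hsum]
  have hAdet : 0 < A.det := hpd.det_pos
  have hAu : IsUnit A.det := hAdet.ne'.isUnit
  have hMw' : M w' = A + (t • Matrix.vecMulVec (x j) (x j) - t • Matrix.vecMulVec (x i) (x i)) := by
    rw [hM w', hA, hM w]
    simp only [hw', add_smul, sub_smul, ite_smul, zero_smul]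
    rw [Finset.sum_sub_distrib, Finset.sum_add_distrib, Finset.sum_ite_eq', Finset.sum_ite_eq']
    simp only [Finset.mem_univ, if_true]
    abel
  -- positive definiteness of the new matrix
  have hq : ∀ v : Fin k → ℝ, (v ⬝ᵥ x i)^2 ≤ (v ⬝ᵥ (A *ᵥ v)) * Li := by
    intro v
    have h1 := psd_cauchy_schwarz A hpd.posSemidef v (A⁻¹ *ᵥ x i)
    have h2 : A *ᵥ (A⁻¹ *ᵥ x i) = x i := by
      rw [mulVec_mulVec, Matrix.mul_nonsing_inv _ hAu, one_mulVec]
    rw [h2] at h1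
    have h3 : (A⁻¹ *ᵥ x i) ⬝ᵥ x i = Li := by rw [dotProduct_comm]
    rw [h3] at h1
    exact h1
  have hvv : ∀ (v u : Fin k → ℝ), v ⬝ᵥ (Matrix.vecMulVec u u *ᵥ v) = (v ⬝ᵥ u)^2 := by
    intro v u
    simp only [dotProduct, mulVec, vecMulVec_apply, Finset.mul_sum, pow_two, Finset.sum_mul]
    apply Finset.sum_congr rfl
    intro a _
    apply Finset.sum_congr rfl
    intro b _
    ring
  have hw'pd : (M w').PosDef := by
    refine posDef_iff_dotProduct_mulVec.mpr ⟨?_, ?_⟩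
    · rw [hMw']
      have hAh := hpd.1
      ext a b
      simp only [conjTranspose_apply, Matrix.add_apply, Matrix.sub_apply, Matrix.smul_apply,
        vecMulVec_apply, star_trivial, smul_eq_mul]
      have hab : A b a = A a b := by
        have := congrFun (congrFun hAh a) b
        simpa [conjTranspose_apply, star_trivial] using this
      rw [hab]; ring
    · intro v hv
      simp only [star_trivial]
      rw [hMw']
      have hexp : v ⬝ᵥ ((A + (t • Matrix.vecMulVec (x j) (x j) - t • Matrix.vecMulVec (x i) (x i))) *ᵥ v)
          = v ⬝ᵥ (A *ᵥ v) + t * (v ⬝ᵥ x j)^2 - t * (v ⬝ᵥ x i)^2 := by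
        simp only [add_mulVec, sub_mulVec, smul_mulVec, dotProduct_add, dotProduct_sub,
          dotProduct_smul, smul_eq_mul]
        rw [hvv, hvv]
        ring
      rw [hexp]
      have hq1 := hq v
      have hApos : 0 < v ⬝ᵥ (A *ᵥ v) := by simpa [star_trivial] using (posDef_iff_dotProduct_mulVec.mp hpd).2 hv
      nlinarith [sq_nonneg (v ⬝ᵥ x j)]
  -- determinant computation
  set U : Matrix (Fin k) (Fin 2) ℝ := fun a p => if p = 0 then t * x j a else -(t * x i a) with hU
  set V : Matrix (Fin 2) (Fin k) ℝ := fun p a => if p = 0 then x j a else x i a with hV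
  have hC : t • Matrix.vecMulVec (x j) (x j) - t • Matrix.vecMulVec (x i) (x i) = U * V := by
    ext a b
    rw [Matrix.mul_apply]
    simp [hU, hV, Matrix.mul_apply, Fin.sum_univ_two, vecMulVec_apply]
    ring
  have hdet : (M w').det = A.det * (1 + V * (A⁻¹ * U)).det := by
    have h1 : M w' = A * (1 + (A⁻¹ * U) * V) := by
      rw [hMw', hC, Matrix.mul_add, Matrix.mul_one, ← Matrix.mul_assoc, ← Matrix.mul_assoc,
        Matrix.mul_nonsing_inv _ hAu, Matrix.one_mul]
    rw [h1, det_mul, Matrix.det_one_add_mul_comm]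
  -- entries of the 2x2 matrix
  have hentry : ∀ p q, (V * (A⁻¹ * U)) p q = (fun a => V p a) ⬝ᵥ (A⁻¹ *ᵥ (fun b => U b q)) := by
    intro p q
    simp [Matrix.mul_apply, mulVec, dotProduct]
  have hcolj : (fun b => U b 0) = t • x j := by
    funext b; simp [hU, smul_eq_mul]
  have hcoli : (fun b => U b 1) = (-t) • x i := by
    funext b; simp [hU, smul_eq_mul]
  have hsymji : x j ⬝ᵥ (A⁻¹ *ᵥ x i) = s := dot_mulVec_symm A⁻¹ hAinv.1 (x j) (x i)
  have hrowj : (fun a => V 0 a) = x j := by funext a; simp [hV]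
  have hrowi : (fun a => V 1 a) = x i := by funext a; simp [hV]
  have h00 : (V * (A⁻¹ * U)) 0 0 = t * Lj := by
    rw [hentry, hcolj, hrowj, mulVec_smul, dotProduct_smul, smul_eq_mul]
  have h01 : (V * (A⁻¹ * U)) 0 1 = -t * s := by
    rw [hentry, hcoli, hrowj, mulVec_smul, dotProduct_smul, smul_eq_mul, hsymji]
  have h10 : (V * (A⁻¹ * U)) 1 0 = t * s := by
    rw [hentry, hcolj, hrowi, mulVec_smul, dotProduct_smul, smul_eq_mul]
  have h11 : (V * (A⁻¹ * U)) 1 1 = -t * Li := by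
    rw [hentry, hcoli, hrowi, mulVec_smul, dotProduct_smul, smul_eq_mul]
  have hG : (1 + V * (A⁻¹ * U)).det = (1 + t*Lj) * (1 - t*Li) + t^2 * s^2 := by
    rw [det_fin_two]
    have e00 : (1 + V * (A⁻¹ * U) : Matrix (Fin 2) (Fin 2) ℝ) 0 0 = 1 + t * Lj := by
      simp [Matrix.add_apply, h00, Matrix.one_apply]
    have e01 : (1 + V * (A⁻¹ * U) : Matrix (Fin 2) (Fin 2) ℝ) 0 1 = -t * s := by
      simp [Matrix.add_apply, h01, Matrix.one_apply]
    have e10 : (1 + V * (A⁻¹ * U) : Matrix (Fin 2) (Fin 2) ℝ) 1 0 = t * s := by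
      simp [Matrix.add_apply, h10, Matrix.one_apply]
    have e11 : (1 + V * (A⁻¹ * U) : Matrix (Fin 2) (Fin 2) ℝ) 1 1 = 1 + -t * Li := by
      simp [Matrix.add_apply, h11, Matrix.one_apply]
    rw [e00, e01, e10, e11]; ring
  have hF : 1 < (1 + t*Lj) * (1 - t*Li) + t^2 * s^2 := by
    have key : 0 < t * (d - t*e) := mul_pos ht0 (sub_pos.mpr hte)
    rw [hd, he] at key
    have hring : (1 + t*Lj) * (1 - t*Li) + t^2 * s^2
        = 1 + t * ((Lj - Li) - t * (Li * Lj - s^2)) := by ring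
    rw [hring]
    linarith [key]
  have hlt : A.det < (M w').det := by
    rw [hdet, hG]
    calc A.det = A.det * 1 := (mul_one _).symm
    _ < A.det * ((1 + t*Lj) * (1 - t*Li) + t^2 * s^2) := mul_lt_mul_of_pos_left hF hAdet
  have hle := hopt w' hw'b hw'sum hw'pd
  have hlog : Real.log A.det < Real.log (M w').det := Real.log_lt_log hAdet hlt
  linarith


/-- Trichotomy of the constrained D-optimal solution: if `w` solves
`max log|M(w)|` over `Ω_ε` with `M(w)` positive definite, then there is a
constant `c` such that `wᵢ = 0` whenever the leverage `xᵢᵀ M(w)⁻¹ xᵢ < c`,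
`wᵢ = ε` whenever it is `> c`, and `0 ≤ wᵢ ≤ ε` when it equals `c`. -/
theorem trichotomy_constrained_D_optimal (N k : ℕ) (x : Fin N → Fin k → ℝ)
    (ε : ℝ) (hε : 0 < ε) (hε1 : ε < 1) (hNε : 1 ≤ N * ε)
    (M : (Fin N → ℝ) → Matrix (Fin k) (Fin k) ℝ)
    (hM : ∀ v, M v = ∑ i, v i • Matrix.vecMulVec (x i) (x i))
    (Ω : Set (Fin N → ℝ))
    (hΩ : Ω = {w | (∀ i, 0 ≤ w i ∧ w i ≤ ε) ∧ ∑ i, w i = 1})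
    (w : Fin N → ℝ) (hw : w ∈ Ω) (hpd : (M w).PosDef)
    (hopt : ∀ w' ∈ Ω, (M w').PosDef →
      Real.log (M w').det ≤ Real.log (M w).det) :
    ∃ c : ℝ, ∀ i,
      (x i ⬝ᵥ ((M w)⁻¹ *ᵥ x i) < c → w i = 0) ∧
      (c < x i ⬝ᵥ ((M w)⁻¹ *ᵥ x i) → w i = ε) ∧
      (x i ⬝ᵥ ((M w)⁻¹ *ᵥ x i) = c → 0 ≤ w i ∧ w i ≤ ε) := by
  classical
  rw [hΩ] at hw
  obtain ⟨hwb, hsum⟩ := hw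
  have hopt' : ∀ w', (∀ i, 0 ≤ w' i ∧ w' i ≤ ε) → (∑ i, w' i = 1) → (M w').PosDef →
      Real.log (M w').det ≤ Real.log (M w).det := by
    intro w' h1 h2 h3
    exact hopt w' (by rw [hΩ]; exact ⟨h1, h2⟩) h3
  have key : ∀ i j, 0 < w i → w j < ε →
      x j ⬝ᵥ ((M w)⁻¹ *ᵥ x j) ≤ x i ⬝ᵥ ((M w)⁻¹ *ᵥ x i) :=
    fun i j => exchange_le N k x ε hε M hM w hwb hsum hpd hopt' i j
  set L : Fin N → ℝ := fun i => x i ⬝ᵥ ((M w)⁻¹ *ᵥ x i) with hLdef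
  have hN : 0 < N := by
    rcases Nat.eq_zero_or_pos N with h | h
    · exfalso; subst h; simpa using hsum
    · exact h
  by_cases hB : ∃ j, w j < ε
  · obtain ⟨j0, hj0⟩ := hB
    set B := Finset.univ.filter (fun j => w j < ε) with hBdef
    have hBne : B.Nonempty := ⟨j0, by simp [hBdef, hj0]⟩
    refine ⟨B.sup' hBne L, fun i => ⟨?_, ?_, fun _ => hwb i⟩⟩
    · intro hlt
      by_contra h0
      have hwi : 0 < w i := lt_of_le_of_ne (hwb i).1 (Ne.symm h0)
      have hle : B.sup' hBne L ≤ L i := by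
        apply Finset.sup'_le
        intro j hj
        simp only [hBdef, Finset.mem_filter, Finset.mem_univ, true_and] at hj
        exact key i j hwi hj
      linarith
    · intro hgt
      by_contra h0
      have hwi : w i < ε := lt_of_le_of_ne (hwb i).2 h0
      have hge : L i ≤ B.sup' hBne L :=
        Finset.le_sup' L (by simp [hBdef, hwi])
      linarith
  · push_neg at hB
    haveI : Nonempty (Fin N) := ⟨⟨0, hN⟩⟩
    refine ⟨Finset.univ.inf' Finset.univ_nonempty L - 1, fun i => ⟨?_, ?_, fun _ => hwb i⟩⟩
    · intro hlt
      exfalso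
      have := Finset.inf'_le L (Finset.mem_univ i)
      linarith
    · intro _
      exact le_antisymm (hwb i).2 (hB i)
end

section
/- Connection between penalized and constrained problems: let α = (α₁,...,α_N) solve max_{0 ≤ αᵢ ≤ λ} [log|Σᵢ αᵢ xᵢxᵢᵀ| + k(1 − Σᵢ αᵢ)]. Set s = Σᵢ αᵢ > 0 and ε = λ/s. Then w = α/s solves max log|M(w)| over Ω_ε = {w : 0 ≤ wᵢ ≤ ε, Σwᵢ = 1}. -/
/-- Connection between the penalized and constrained problems: if `α` solves
`max_{0 ≤ αᵢ ≤ λ} [log|M(α)| + k(1 − ∑αᵢ)]` with `M(α)` positive definite and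
`s = ∑αᵢ > 0`, then `w = α/s` solves `max log|M(·)|` over `Ω_ε` with
`ε = λ/s`. -/
theorem penalized_to_constrained (N k : ℕ) (x : Fin N → Fin k → ℝ)
    (lam : ℝ) (hlam : 0 < lam)
    (M : (Fin N → ℝ) → Matrix (Fin k) (Fin k) ℝ)
    (hM : ∀ v, M v = ∑ i, v i • Matrix.vecMulVec (x i) (x i))
    (α : Fin N → ℝ) (hbox : ∀ i, 0 ≤ α i ∧ α i ≤ lam)
    (hpdα : (M α).PosDef)
    (hmaxα : ∀ β : Fin N → ℝ, (∀ i, 0 ≤ β i ∧ β i ≤ lam) → (M β).PosDef →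
      Real.log (M β).det + k * (1 - ∑ i, β i) ≤
        Real.log (M α).det + k * (1 - ∑ i, α i))
    (s : ℝ) (hs : s = ∑ i, α i) (hspos : 0 < s)
    (ε : ℝ) (hε : ε = lam / s)
    (w : Fin N → ℝ) (hwdef : w = s⁻¹ • α) :
    ((∀ i, 0 ≤ w i ∧ w i ≤ ε) ∧ ∑ i, w i = 1) ∧
    ∀ w' : Fin N → ℝ, ((∀ i, 0 ≤ w' i ∧ w' i ≤ ε) ∧ ∑ i, w' i = 1) →
      (M w').PosDef → Real.log (M w').det ≤ Real.log (M w).det := by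
  have hsne : s ≠ 0 := ne_of_gt hspos
  have hMc : ∀ (c : ℝ) (v : Fin N → ℝ), M (c • v) = c • M v := by
    intro c v
    rw [hM, hM, Finset.smul_sum]
    refine Finset.sum_congr rfl fun i _ => ?_
    simp [smul_smul]
  have hdet : ∀ (c : ℝ) (v : Fin N → ℝ), (M (c • v)).det = c ^ k * (M v).det := by
    intro c v
    rw [hMc, Matrix.det_smul, Fintype.card_fin]
  have hαw : α = s • w := by
    rw [hwdef, smul_smul, mul_inv_cancel₀ hsne, one_smul]
  have hskpos : (0 : ℝ) < s ^ k := pow_pos hspos k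
  have hdetα : (0 : ℝ) < (M α).det := hpdα.det_pos
  have hdetw : (0 : ℝ) < (M w).det := by
    have := hdet s w
    rw [← hαw] at this
    nlinarith
  constructor
  · constructor
    · intro i
      have h := hbox i
      constructor
      · rw [hwdef]; exact mul_nonneg (inv_nonneg.mpr hspos.le) h.1
      · rw [hwdef, hε]
        simp only [Pi.smul_apply, smul_eq_mul]
        rw [inv_mul_eq_div, div_le_div_iff_of_pos_right hspos]
        exact h.2
    · rw [hwdef]
      simp only [Pi.smul_apply, smul_eq_mul, ← Finset.mul_sum, ← hs]
      exact inv_mul_cancel₀ hsne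
  · rintro w' ⟨hbox', hsum'⟩ hpd'
    set β : Fin N → ℝ := s • w' with hβ
    have hboxβ : ∀ i, 0 ≤ β i ∧ β i ≤ lam := by
      intro i
      have h := hbox' i
      constructor
      · exact mul_nonneg hspos.le h.1
      · have : s * w' i ≤ s * ε := by
          exact mul_le_mul_of_nonneg_left h.2 hspos.le
        calc β i ≤ s * ε := this
          _ = lam := by rw [hε]; field_simp
    have hpdβ : (M β).PosDef := by
      rw [hβ, hMc]
      obtain ⟨hherm, hquad⟩ := hpd'
      refine ⟨?_, ?_⟩
      · unfold Matrix.IsHermitian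
        rw [Matrix.conjTranspose_smul, hherm.eq]
        simp
      · intro y hy
        rw [show (y.sum fun i xi => y.sum fun j xj => star xi * (s • M w') i j * xj) = s * (y.sum fun i xi => y.sum fun j xj => star xi * M w' i j * xj) by
          simp only [Finsupp.sum, Finset.mul_sum, Matrix.smul_apply, smul_eq_mul]
          refine Finset.sum_congr rfl fun i _ => Finset.sum_congr rfl fun j _ => ?_
          ring]
        exact mul_pos hspos (hquad hy)
    have hsumβ : ∑ i, β i = s := by
      simp only [hβ, Pi.smul_apply, smul_eq_mul, ← Finset.mul_sum, hsum', mul_one]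
    have key := hmaxα β hboxβ hpdβ
    rw [hsumβ, ← hs] at key
    have hlog : Real.log (M β).det ≤ Real.log (M α).det := by linarith
    have hdetβ : (M β).det = s ^ k * (M w').det := hdet s w'
    have hdetα' : (M α).det = s ^ k * (M w).det := by rw [hαw]; exact hdet s w
    rw [hdetβ, hdetα', Real.log_mul (ne_of_gt hskpos) hpd'.det_pos.ne',
      Real.log_mul (ne_of_gt hskpos) hdetw.ne'] at hlog
    linarith
end

section
/- If α solves the penalized problem max_{0 ≤ αᵢ ≤ λ} [log|M(α)| + k(1 − Σᵢαᵢ)] with M(α) = Σᵢ αᵢ xᵢxᵢᵀ positive definite, then for each i: αᵢ = 0 if xᵢᵀ M(α)⁻¹ xᵢ < k, and αᵢ = λ if xᵢᵀ M(α)⁻¹ xᵢ > k. -/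
open Matrix

lemma cs_bound {k : ℕ} {A : Matrix (Fin k) (Fin k) ℝ} (hA : A.PosDef) (u v : Fin k → ℝ) :
    (u ⬝ᵥ v) ^ 2 ≤ (u ⬝ᵥ A⁻¹ *ᵥ u) * (v ⬝ᵥ A *ᵥ v) := by
  set w := A⁻¹ *ᵥ u with hw
  have hAw : A *ᵥ w = u := by
    rw [hw, Matrix.mulVec_mulVec, Matrix.mul_nonsing_inv _ hA.det_pos.ne'.isUnit, Matrix.one_mulVec]
  have hsym : ∀ a b : Fin k → ℝ, a ⬝ᵥ A *ᵥ b = b ⬝ᵥ A *ᵥ a := by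
    intro a b
    have hAt : Aᵀ = A := by
      have := hA.isHermitian
      simpa [Matrix.IsHermitian, Matrix.conjTranspose_eq_transpose_of_trivial] using this
    rw [Matrix.dotProduct_mulVec, ← Matrix.mulVec_transpose, hAt, dotProduct_comm]
  have hq : ∀ s : ℝ, 0 ≤ (u ⬝ᵥ w) * (s * s) + (2 * (u ⬝ᵥ v)) * s + v ⬝ᵥ A *ᵥ v := by
    intro s
    have h := hA.posSemidef.dotProduct_mulVec_nonneg (v + s • w)
    simp only [star_trivial, Matrix.mulVec_add, Matrix.mulVec_smul, hAw, dotProduct_add,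
      add_dotProduct, dotProduct_smul, smul_dotProduct, smul_eq_mul] at h
    have h2 : w ⬝ᵥ A *ᵥ v = v ⬝ᵥ u := by rw [hsym, hAw]
    have h3 : w ⬝ᵥ u = u ⬝ᵥ w := dotProduct_comm _ _
    have h4 : v ⬝ᵥ u = u ⬝ᵥ v := dotProduct_comm _ _
    rw [h2, h3, h4] at h
    nlinarith [h]
  have hd := discrim_le_zero hq
  rw [discrim] at hd
  nlinarith [hd]

lemma posdef_add_rank_one {k : ℕ} {A : Matrix (Fin k) (Fin k) ℝ} (hA : A.PosDef)
    (u : Fin k → ℝ) (t : ℝ) (ht : 0 < 1 + t * (u ⬝ᵥ A⁻¹ *ᵥ u)) :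
    (A + t • Matrix.vecMulVec u u).PosDef := by
  apply Matrix.PosDef.of_dotProduct_mulVec_pos
  · refine hA.isHermitian.add ?_
    show _ = _
    ext i j
    simp [Matrix.conjTranspose_apply, Matrix.vecMulVec_apply, mul_comm]
  · intro v hv
    simp only [star_trivial]
    have hvv : (t • Matrix.vecMulVec u u) *ᵥ v = (t * (u ⬝ᵥ v)) • u := by
      ext i
      simp only [Matrix.mulVec, Matrix.smul_apply, Matrix.vecMulVec_apply, dotProduct,
        Pi.smul_apply, smul_eq_mul]
      simp only [Finset.mul_sum, Finset.sum_mul]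
      exact Finset.sum_congr rfl fun j _ => by ring
    rw [Matrix.add_mulVec, dotProduct_add, hvv, dotProduct_smul, smul_eq_mul]
    have hQ : 0 < v ⬝ᵥ A *ᵥ v := by simpa using hA.dotProduct_mulVec_pos hv
    have hcs := cs_bound hA u v
    have hc : 0 ≤ u ⬝ᵥ A⁻¹ *ᵥ u := by simpa using hA.inv.posSemidef.dotProduct_mulVec_nonneg u
    rw [dotProduct_comm v u]
    rcases le_or_gt 0 t with h | h
    · nlinarith [sq_nonneg (u ⬝ᵥ v)]
    · nlinarith [mul_le_mul_of_nonpos_left hcs h.le]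

lemma det_add_rank_one {k : ℕ} {A : Matrix (Fin k) (Fin k) ℝ} (hA : A.PosDef)
    (u : Fin k → ℝ) (t : ℝ) :
    (A + t • Matrix.vecMulVec u u).det = A.det * (1 + t * (u ⬝ᵥ A⁻¹ *ᵥ u)) := by
  have h1 : t • Matrix.vecMulVec u u = Matrix.vecMulVec (t • u) u := by
    ext i j; simp [Matrix.vecMulVec_apply]; ring
  rw [h1, Matrix.vecMulVec_eq Unit,
    Matrix.det_add_replicateCol_mul_replicateRow hA.det_pos.ne'.isUnit]
  congr 1
  rw [Matrix.det_unique]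
  rw [Matrix.add_apply, Matrix.one_apply_eq]
  congr 1
  rw [Matrix.mul_assoc, ← Matrix.replicateCol_mulVec, Matrix.replicateRow_mul_replicateCol_apply,
    Matrix.mulVec_smul, dotProduct_smul, smul_eq_mul]

/-- KKT conditions for the penalized problem: if `α` solves
`max_{0 ≤ αᵢ ≤ λ} [log|M(α)| + k(1 − ∑αᵢ)]` with `M(α)` positive definite,
then `αᵢ = 0` if `xᵢᵀ M(α)⁻¹ xᵢ < k` and `αᵢ = λ` if `xᵢᵀ M(α)⁻¹ xᵢ > k`. -/
theorem penalized_KKT (N k : ℕ) (x : Fin N → Fin k → ℝ)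
    (lam : ℝ) (hlam : 0 < lam)
    (M : (Fin N → ℝ) → Matrix (Fin k) (Fin k) ℝ)
    (hM : ∀ v, M v = ∑ i, v i • Matrix.vecMulVec (x i) (x i))
    (α : Fin N → ℝ) (hbox : ∀ i, 0 ≤ α i ∧ α i ≤ lam)
    (hpdα : (M α).PosDef)
    (hmaxα : ∀ β : Fin N → ℝ, (∀ i, 0 ≤ β i ∧ β i ≤ lam) → (M β).PosDef →
      Real.log (M β).det + k * (1 - ∑ i, β i) ≤
        Real.log (M α).det + k * (1 - ∑ i, α i)) :
    ∀ i : Fin N,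
      (x i ⬝ᵥ ((M α)⁻¹ *ᵥ x i) < (k : ℝ) → α i = 0) ∧
      ((k : ℝ) < x i ⬝ᵥ ((M α)⁻¹ *ᵥ x i) → α i = lam) := by
  intro i
  set c : ℝ := x i ⬝ᵥ ((M α)⁻¹ *ᵥ x i) with hcdef
  have hc : 0 ≤ c := by simpa using hpdα.inv.posSemidef.dotProduct_mulVec_nonneg (x i)
  -- key variational inequality
  have key : ∀ t : ℝ, 0 ≤ α i + t → α i + t ≤ lam → 0 < 1 + t * c →
      Real.log (1 + t * c) ≤ k * t := by
    intro t ht0 htlam htc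
    set β : Fin N → ℝ := Function.update α i (α i + t) with hβ
    have hβbox : ∀ j, 0 ≤ β j ∧ β j ≤ lam := by
      intro j
      rcases eq_or_ne j i with rfl | hj
      · simp [hβ, Function.update_self, ht0, htlam]
      · simp [hβ, Function.update_of_ne hj, hbox j]
    have hMβ : M β = M α + t • Matrix.vecMulVec (x i) (x i) := by
      rw [hM, hM]
      have : ∀ j : Fin N, β j • Matrix.vecMulVec (x j) (x j) =
          α j • Matrix.vecMulVec (x j) (x j) +
            (if j = i then t • Matrix.vecMulVec (x i) (x i) else 0) := by
        intro j
        rcases eq_or_ne j i with rfl | hj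
        · simp [hβ, Function.update_self, add_smul]
        · simp [hβ, Function.update_of_ne hj, hj]
      rw [Finset.sum_congr rfl fun j _ => this j, Finset.sum_add_distrib,
        Finset.sum_ite_eq' Finset.univ i (fun _ => t • Matrix.vecMulVec (x i) (x i))]
      simp
    have hβsum : (∑ j, β j) = (∑ j, α j) + t := by
      have : ∀ j : Fin N, β j = α j + (if j = i then t else 0) := by
        intro j
        rcases eq_or_ne j i with rfl | hj
        · simp [hβ, Function.update_self]
        · simp [hβ, Function.update_of_ne hj, hj]
      rw [Finset.sum_congr rfl fun j _ => this j, Finset.sum_add_distrib,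
        Finset.sum_ite_eq' Finset.univ i (fun _ => t)]
      simp
    have hβpd : (M β).PosDef := by
      rw [hMβ]; exact posdef_add_rank_one hpdα _ t (by rwa [← hcdef])
    have hβdet : (M β).det = (M α).det * (1 + t * c) := by
      rw [hMβ, det_add_rank_one hpdα, ← hcdef]
    have h := hmaxα β hβbox hβpd
    rw [hβdet, Real.log_mul hpdα.det_pos.ne' htc.ne', hβsum] at h
    nlinarith [h]
  constructor
  · -- c < k → α i = 0
    intro hck
    by_contra h0
    have hαpos : 0 < α i := lt_of_le_of_ne (hbox i).1 (Ne.symm h0)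
    have hk : (0:ℝ) < k := lt_of_le_of_lt hc hck
    set ε2 : ℝ := (k - c) / (2 * k * (c + 1)) with hε2def
    have hε2pos : 0 < ε2 := by
      apply div_pos (by linarith) (by positivity)
    have hε2eq : 2 * k * (c + 1) * ε2 = k - c := by
      rw [hε2def]; field_simp
    set ε : ℝ := min (α i) ε2 with hεdef
    have hεpos : 0 < ε := lt_min hαpos hε2pos
    have hεle : ε ≤ ε2 := min_le_right _ _
    have hεα : ε ≤ α i := min_le_left _ _
    -- k * ε * c < k - c
    have hkey : k * (ε * c) < k - c := by
      nlinarith [mul_le_mul_of_nonneg_right hεle (mul_nonneg hk.le hc), hε2eq, hε2pos,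
        mul_nonneg hεpos.le hc]
    have hεc1 : ε * c < 1 := by nlinarith
    have htc : 0 < 1 + (-ε) * c := by nlinarith
    have hlog := key (-ε) (by linarith) (by linarith [(hbox i).2]) htc
    have hlow := Real.one_sub_inv_le_log_of_pos htc
    have hinv : (1 + (-ε) * c)⁻¹ * (1 + (-ε) * c) = 1 := inv_mul_cancel₀ htc.ne'
    have h5 : 1 - (1 + (-ε) * c)⁻¹ ≤ k * (-ε) := le_trans hlow hlog
    nlinarith [mul_le_mul_of_nonneg_right h5 htc.le, hinv]
  · -- k < c → α i = lam
    intro hkc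
    by_contra h0
    have hαlt : α i < lam := lt_of_le_of_ne (hbox i).2 h0
    have hc0 : (0:ℝ) < c := lt_of_le_of_lt (Nat.cast_nonneg k) hkc
    have hk0 : (0:ℝ) ≤ k := Nat.cast_nonneg k
    set ε2 : ℝ := (c - k) / (2 * c * (k + 1)) with hε2def
    have hε2pos : 0 < ε2 := by
      apply div_pos (by linarith) (by positivity)
    have hε2eq : 2 * c * (k + 1) * ε2 = c - k := by
      rw [hε2def]; field_simp
    set ε : ℝ := min (lam - α i) ε2 with hεdef
    have hεpos : 0 < ε := lt_min (by linarith) hε2pos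
    have hεle : ε ≤ ε2 := min_le_right _ _
    have hεα : ε ≤ lam - α i := min_le_left _ _
    have hkey : k * (ε * c) < c - k := by
      nlinarith [mul_le_mul_of_nonneg_right hεle (mul_nonneg hk0 hc0.le), hε2eq, hε2pos,
        mul_nonneg hεpos.le hc0.le]
    have htc : 0 < 1 + ε * c := by nlinarith
    have hlog := key ε (by linarith [(hbox i).1]) (by linarith) htc
    have hlow := Real.one_sub_inv_le_log_of_pos htc
    have hinv : (1 + ε * c)⁻¹ * (1 + ε * c) = 1 := inv_mul_cancel₀ htc.ne'
    have h5 : 1 - (1 + ε * c)⁻¹ ≤ k * ε := le_trans hlow hlog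
    nlinarith [mul_le_mul_of_nonneg_right h5 htc.le, hinv]
end

section
/- Equality condition in the duality: log|M(w)| = −log|W| holds for feasible W (xᵢᵀWxᵢ ≤ k, W ≻ 0) and simplex weight w if and only if W = M(w)⁻¹ and xᵢᵀWxᵢ = k for every i with wᵢ > 0. -/
open Matrix


-- trace of a Hermitian matrix = sum of eigenvalues
lemma trace_eq_sum_eig {n : Type*} [Fintype n] [DecidableEq n] {A : Matrix n n ℝ}
    (hA : A.IsHermitian) : A.trace = ∑ i, hA.eigenvalues i := by
  nth_rewrite 1 [hA.spectral_theorem]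
  rw [Unitary.conjStarAlgAut_apply, Matrix.trace_mul_comm, ← Matrix.mul_assoc,
    (Matrix.mem_unitaryGroup_iff').mp hA.eigenvectorUnitary.2, Matrix.one_mul,
    Matrix.trace_diagonal]
  simp

lemma all_one_of_amgm {k : ℕ} (lam : Fin k → ℝ) (hpos : ∀ i, 0 < lam i)
    (hprod : ∏ i, lam i = 1) (hsum : ∑ i, lam i ≤ k) :
    (∀ i, lam i = 1) ∧ ∑ i, lam i = (k : ℝ) := by
  have hlog : ∑ i, Real.log (lam i) = 0 := by
    rw [← Real.log_prod (fun i _ => (hpos i).ne'), hprod, Real.log_one]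
  have hterm : ∀ i ∈ Finset.univ, (0:ℝ) ≤ lam i - 1 - Real.log (lam i) := by
    intro i _
    have := Real.log_le_sub_one_of_pos (hpos i)
    linarith
  have hsum0 : ∑ i, (lam i - 1 - Real.log (lam i)) ≤ 0 := by
    simp only [Finset.sum_sub_distrib, hlog, Finset.sum_const, Finset.card_univ,
      Fintype.card_fin, nsmul_eq_mul, mul_one]
    linarith
  have hz : ∑ i, (lam i - 1 - Real.log (lam i)) = 0 :=
    le_antisymm hsum0 (Finset.sum_nonneg hterm)
  have heach := (Finset.sum_eq_zero_iff_of_nonneg hterm).mp hz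
  constructor
  · intro i
    by_contra h
    have := Real.log_lt_sub_one_of_pos (hpos i) h
    have := heach i (Finset.mem_univ i)
    linarith
  · have : ∑ i, (lam i - 1 - Real.log (lam i)) =
        (∑ i, lam i) - k - 0 := by
      simp only [Finset.sum_sub_distrib, hlog, Finset.sum_const, Finset.card_univ,
        Fintype.card_fin, nsmul_eq_mul, mul_one]
    rw [this] at hz
    linarith

lemma trace_mul_M {N k : ℕ} (x : Fin N → Fin k → ℝ) (w : Fin N → ℝ)
    (W : Matrix (Fin k) (Fin k) ℝ) :
    (W * ∑ i, w i • Matrix.vecMulVec (x i) (x i)).trace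
      = ∑ i, w i * (x i ⬝ᵥ (W *ᵥ x i)) := by
  rw [Finset.mul_sum, Matrix.trace_sum]
  refine Finset.sum_congr rfl fun i _ => ?_
  rw [Matrix.mul_smul, Matrix.trace_smul]
  simp only [smul_eq_mul]
  congr 1
  simp only [Matrix.trace, Matrix.diag, Matrix.mul_apply, Matrix.vecMulVec_apply,
    dotProduct, Matrix.mulVec, Finset.mul_sum]
  exact Finset.sum_congr rfl fun a _ => Finset.sum_congr rfl fun b _ => by ring

/-- Equality condition in the ellipsoid duality: `log|M(w)| = −log|W|` holds
for feasible `W` (`W ≻ 0`, `xᵢᵀWxᵢ ≤ k`) and simplex weight `w` (with `M(w)`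
positive definite) if and only if `W = M(w)⁻¹` and `xᵢᵀWxᵢ = k` for every `i`
with `wᵢ > 0`. -/
theorem ellipsoid_duality_equality_condition (N k : ℕ) (x : Fin N → Fin k → ℝ)
    (M : (Fin N → ℝ) → Matrix (Fin k) (Fin k) ℝ)
    (hM : ∀ v, M v = ∑ i, v i • Matrix.vecMulVec (x i) (x i))
    (W : Matrix (Fin k) (Fin k) ℝ) (hW : W.PosDef)
    (hfeas : ∀ i, x i ⬝ᵥ (W *ᵥ x i) ≤ (k : ℝ))
    (w : Fin N → ℝ) (hw : (∀ i, 0 ≤ w i) ∧ ∑ i, w i = 1)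
    (hpd : (M w).PosDef) :
    Real.log (M w).det = - Real.log W.det ↔
      (W = (M w)⁻¹ ∧ ∀ i, 0 < w i → x i ⬝ᵥ (W *ᵥ x i) = (k : ℝ)) := by
  have hdetM : 0 < (M w).det := hpd.det_pos
  have hdetW : 0 < W.det := hW.det_pos
  constructor
  · intro h
    -- det (M w) * det W = 1
    have hlogsum : Real.log ((M w).det * W.det) = 0 := by
      rw [Real.log_mul hdetM.ne' hdetW.ne']; linarith
    have hdet1 : (M w).det * W.det = 1 := by
      have := Real.exp_log (mul_pos hdetM hdetW)
      rw [hlogsum, Real.exp_zero] at this; linarith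
    -- square root of W
    set S := (open MatrixOrder in CFC.sqrt W) with hSdef
    have hSS : S * S = W := (open MatrixOrder in CFC.sqrt_mul_sqrt_self W hW.posSemidef.nonneg)
    have hSh : Sᴴ = S := (open MatrixOrder in (CFC.sqrt_nonneg W).posSemidef.1)
    set A := S * M w * S with hAdef
    have hAps : A.PosSemidef := by
      have := hpd.posSemidef.mul_mul_conjTranspose_same S
      rwa [hSh] at this
    have hdetS : S.det * S.det = W.det := by rw [← Matrix.det_mul, hSS]
    have hdetA : A.det = 1 := by
      rw [hAdef, Matrix.det_mul, Matrix.det_mul]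
      nlinarith [hdet1, hdetS]
    have htrA : A.trace = ∑ i, w i * (x i ⬝ᵥ (W *ᵥ x i)) := by
      rw [hAdef, Matrix.trace_mul_comm, ← Matrix.mul_assoc, hSS, hM w]
      exact trace_mul_M x w W
    have htr_le : A.trace ≤ (k : ℝ) := by
      rw [htrA]
      calc ∑ i, w i * (x i ⬝ᵥ (W *ᵥ x i)) ≤ ∑ i, w i * (k : ℝ) :=
            Finset.sum_le_sum fun i _ =>
              mul_le_mul_of_nonneg_left (hfeas i) (hw.1 i)
        _ = (k : ℝ) := by rw [← Finset.sum_mul, hw.2, one_mul]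
    -- eigenvalues of A
    set lam := hAps.1.eigenvalues with hlam
    have hprod : ∏ i, lam i = 1 := by
      have := hAps.1.det_eq_prod_eigenvalues
      rw [hdetA] at this
      exact_mod_cast this.symm
    have hnn : ∀ i, 0 ≤ lam i := fun i => hAps.eigenvalues_nonneg i
    have hpos : ∀ i, 0 < lam i := by
      intro i
      rcases (hnn i).lt_or_eq with h' | h'
      · exact h'
      · exfalso
        have : ∏ j, lam j = 0 := Finset.prod_eq_zero (Finset.mem_univ i) h'.symm
        rw [hprod] at this; norm_num at this
    have hsum : ∑ i, lam i ≤ (k : ℝ) := by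
      rw [← trace_eq_sum_eig hAps.1]; exact htr_le
    obtain ⟨hone, hsumk⟩ := all_one_of_amgm lam hpos hprod hsum
    -- A = 1
    have hA1 : A = 1 := by
      have hspec := hAps.1.spectral_theorem
      have hdiag : Matrix.diagonal (RCLike.ofReal ∘ lam) = (1 : Matrix (Fin k) (Fin k) ℝ) := by
        ext i j
        by_cases hij : i = j
        · subst hij; simp [hone i]
        · simp [Matrix.diagonal_apply_ne _ hij, Matrix.one_apply_ne hij]
      rw [Unitary.conjStarAlgAut_apply, hdiag, Matrix.mul_one] at hspec
      rw [hspec, Matrix.mem_unitaryGroup_iff.mp hAps.1.eigenvectorUnitary.2]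
    -- W = (M w)⁻¹
    have hdetSne : S.det ≠ 0 := by
      intro h0; rw [h0, mul_zero] at hdetS; exact hdetW.ne (hdetS)
    have hMS : M w * S = S⁻¹ := by
      have := congrArg (fun B => S⁻¹ * B) hA1
      simp only [Matrix.mul_one] at this
      rw [hAdef, ← Matrix.mul_assoc, ← Matrix.mul_assoc,
        Matrix.nonsing_inv_mul S hdetSne.isUnit, Matrix.one_mul] at this
      rw [this]
    have hMW : M w * W = 1 := by
      rw [← hSS, ← Matrix.mul_assoc, hMS, Matrix.nonsing_inv_mul S hdetSne.isUnit]
    refine ⟨(Matrix.inv_eq_right_inv hMW).symm, ?_⟩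
    -- trace equality forces each feasibility constraint tight
    have htrk : ∑ i, w i * (x i ⬝ᵥ (W *ᵥ x i)) = (k : ℝ) := by
      rw [← htrA, trace_eq_sum_eig hAps.1]; exact hsumk
    have hsum_eq : ∑ i, w i * (x i ⬝ᵥ (W *ᵥ x i)) = ∑ i, w i * (k : ℝ) := by
      rw [htrk, ← Finset.sum_mul, hw.2, one_mul]
    have heach := (Finset.sum_eq_sum_iff_of_le
      (fun i _ => mul_le_mul_of_nonneg_left (hfeas i) (hw.1 i))).mp hsum_eq
    intro i hwi
    have := heach i (Finset.mem_univ i)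
    exact mul_left_cancel₀ hwi.ne' this
  · rintro ⟨hWeq, -⟩
    rw [hWeq, Matrix.det_nonsing_inv, Ring.inverse_eq_inv', Real.log_inv, neg_neg]
end
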